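/- Let ψ ∈ S(m_ψ, L_ψ) with minimizer y_opt, let 𝓖, 𝓥_l satisfy the connectivity assumption, and let z minimize f(y) = ½(y−r)ᵀ(𝓛⊗I_d)(y−r) + Σ_{i∈𝓥_l} ψ(y_i). Then y_opt lies in the set {y : ⟨∇ψ(z_i), z_i − y⟩ ≥ 0 for all i ∈ 𝓥_l}. -/

import Mathlib

open Matrix
open scoped Kronecker

def memS {E : Type*} [NormedAddCommGroup E] [InnerProductSpace ℝ E] [CompleteSpace E]
    (m L : ℝ) (f : E → ℝ) : Prop :=
  ContDiff ℝ 1 f ∧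
    ∀ y₁ y₂ : E,
      m * ‖y₁ - y₂‖ ^ 2 ≤ (inner ℝ (gradient f y₁ - gradient f y₂) (y₁ - y₂) : ℝ) ∧
      (inner ℝ (gradient f y₁ - gradient f y₂) (y₁ - y₂) : ℝ) ≤ L * ‖y₁ - y₂‖ ^ 2

noncomputable def bigf {N d : ℕ} (𝓛 : Matrix (Fin N) (Fin N) ℝ)
    (r : EuclideanSpace ℝ (Fin N × Fin d)) (Vl : Finset (Fin N))
    (ψ : EuclideanSpace ℝ (Fin d) → ℝ) (y : EuclideanSpace ℝ (Fin N × Fin d)) : ℝ :=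
  (1 / 2) * ((fun p => y p - r p) ⬝ᵥ
      (𝓛 ⊗ₖ (1 : Matrix (Fin d) (Fin d) ℝ)).mulVec (fun p => y p - r p))
    + ∑ i ∈ Vl, ψ (WithLp.toLp 2 (fun j => y (i, j)))

/-- at the minimizer `z` of `f`, the source `y_opt` lies in the set
`{y : ⟨∇ψ(z_i), z_i − y⟩ ≥ 0 for all i ∈ 𝓥_l}`. -/
theorem stmt8 {N d : ℕ} [NeZero N] [NeZero d]
    (G : SimpleGraph (Fin N)) [DecidableRel G.Adj]
    (Vl : Finset (Fin N)) (hVl : Vl.Nonempty)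
    (hconn : ∀ v : Fin N, ∃ w ∈ Vl, G.Reachable v w)
    (mψ Lψ : ℝ) (hmψ : 0 < mψ) (hmLψ : mψ ≤ Lψ)
    (ψ : EuclideanSpace ℝ (Fin d) → ℝ) (hψ : memS mψ Lψ ψ)
    (yopt : EuclideanSpace ℝ (Fin d)) (hyopt : gradient ψ yopt = 0)
    (r : EuclideanSpace ℝ (Fin N × Fin d))
    (z : EuclideanSpace ℝ (Fin N × Fin d))
    (hz : ∀ y, bigf (G.lapMatrix ℝ) r Vl ψ z ≤ bigf (G.lapMatrix ℝ) r Vl ψ y) :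
    yopt ∈ {y : EuclideanSpace ℝ (Fin d) |
      ∀ i ∈ Vl, 0 ≤ (inner ℝ (gradient ψ (WithLp.toLp 2 (fun j => z (i, j))))
        ((show EuclideanSpace ℝ (Fin d) from WithLp.toLp 2 (fun j => z (i, j))) - y) : ℝ)} := by
  intro i _
  have h := (hψ.2 (show EuclideanSpace ℝ (Fin d) from WithLp.toLp 2 (fun j => z (i, j))) yopt).1
  rw [hyopt, sub_zero] at h
  refine le_trans ?_ h
  positivity
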